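/- Let v_0, v_1, … be formal variables. There exists a unique sequence of formal power series w_0, w_1, … ∈ ℂ[[v_0, v_1, …]] such that the Laurent series y = (1/√2) ∑_{n≥0}(v_n − δ_{n,1}) z^n + √2/z + √2 ∑_{n≥0} w_n z^{−n−2} satisfies (y²)_− = (1/z + ∑_{n≥0} w_n z^{−n−2})², where (·)_− denotes the part with strictly negative powers of z. -/

import Mathlib

open MvPowerSeries

noncomputable instance : TopologicalSpace (MvPowerSeries ℕ ℂ) :=
  Pi.topologicalSpace

/-- The coefficients (in `ℂ[[v₀,v₁,…]]`, with `v_n = MvPowerSeries.X n`) of the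
formal Laurent series
`y = (1/√2) ∑_{n≥0} (v_n − δ_{n,1}) z^n + √2/z + √2 ∑_{n≥0} w_n z^{−n−2}`,
as a function of the exponent of `z`. -/
noncomputable def yCoeff (w : ℕ → MvPowerSeries ℕ ℂ) (n : ℤ) : MvPowerSeries ℕ ℂ :=
  if 0 ≤ n then
    ((Real.sqrt 2 : ℂ))⁻¹ • (MvPowerSeries.X n.toNat - if n = 1 then 1 else 0)
  else if n = -1 then (Real.sqrt 2 : ℂ) • 1
  else (Real.sqrt 2 : ℂ) • w (n.natAbs - 2)

/-- The coefficients of the principal-part series `1/z + ∑_{n≥0} w_n z^{−n−2}`. -/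
noncomputable def uCoeff (w : ℕ → MvPowerSeries ℕ ℂ) (n : ℤ) : MvPowerSeries ℕ ℂ :=
  if n = -1 then 1 else if n ≤ -2 then w (n.natAbs - 2) else 0

namespace SpecialDeformationAux

noncomputable instance : IsTopologicalAddGroup (MvPowerSeries ℕ ℂ) :=
  inferInstanceAs (IsTopologicalAddGroup ((ℕ →₀ ℕ) → ℂ))

noncomputable instance : T2Space (MvPowerSeries ℕ ℂ) :=
  inferInstanceAs (T2Space ((ℕ →₀ ℕ) → ℂ))

local notation "PS" => MvPowerSeries ℕ ℂ

lemma sq2_ne : ((Real.sqrt 2 : ℝ) : ℂ) ≠ 0 := by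
  simp only [ne_eq, Complex.ofReal_eq_zero]
  positivity

lemma sq2_mul_sq2 : ((Real.sqrt 2 : ℝ) : ℂ) * ((Real.sqrt 2 : ℝ) : ℂ) = 2 := by
  rw [← Complex.ofReal_mul, Real.mul_self_sqrt (by norm_num)]
  norm_num

/-- The nonnegative-exponent coefficients. -/
noncomputable def aC (k : ℕ) : PS := MvPowerSeries.X k - if k = 1 then 1 else 0

lemma yCoeff_nonneg (w : ℕ → PS) {p : ℤ} (hp : 0 ≤ p) :
    yCoeff w p = ((Real.sqrt 2 : ℝ) : ℂ)⁻¹ • aC p.toNat := by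
  rw [yCoeff, if_pos hp, aC]
  congr 2
  exact if_congr (by omega) rfl rfl

lemma uCoeff_nonneg (w : ℕ → PS) {p : ℤ} (hp : 0 ≤ p) : uCoeff w p = 0 := by
  rw [uCoeff, if_neg (by omega), if_neg (by omega)]

lemma yCoeff_neg (w : ℕ → PS) {p : ℤ} (hp : p < 0) :
    yCoeff w p = ((Real.sqrt 2 : ℝ) : ℂ) • uCoeff w p := by
  rw [yCoeff, uCoeff, if_neg (by omega)]
  by_cases h : p = -1
  · rw [if_pos h, if_pos h]
  · rw [if_neg h, if_neg h, if_pos (by omega)]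

/-- `∑' k, X k * g k` as an explicit power series. -/
noncomputable def SX (g : ℕ → PS) : PS :=
  (fun d => ∑ k ∈ d.support, MvPowerSeries.coeff (d - Finsupp.single k 1) (g k) :
    (ℕ →₀ ℕ) → ℂ)

lemma coeff_SX (g : ℕ → PS) (d : ℕ →₀ ℕ) :
    MvPowerSeries.coeff d (SX g) =
      ∑ k ∈ d.support, MvPowerSeries.coeff (d - Finsupp.single k 1) (g k) := rfl

lemma coeff_X_mul' (k : ℕ) (φ : PS) (d : ℕ →₀ ℕ) :
    MvPowerSeries.coeff d (MvPowerSeries.X k * φ)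
      = if k ∈ d.support then MvPowerSeries.coeff (d - Finsupp.single k 1) φ else 0 := by
  rw [MvPowerSeries.X, MvPowerSeries.coeff_monomial_mul]
  refine if_congr ?_ (one_mul _) rfl
  rw [Finsupp.single_le_iff, Finsupp.mem_support_iff]
  omega

lemma hasSum_SX (g : ℕ → PS) : HasSum (fun k : ℕ => MvPowerSeries.X k * g k) (SX g) := by
  have key : ∀ d : ℕ →₀ ℕ, HasSum (fun k : ℕ => MvPowerSeries.coeff d (MvPowerSeries.X k * g k))
      (MvPowerSeries.coeff d (SX g)) := by
    intro d
    have h0 : ∀ k ∉ d.support, MvPowerSeries.coeff d (MvPowerSeries.X k * g k) = 0 := by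
      intro k hk
      rw [coeff_X_mul', if_neg hk]
    have h := hasSum_sum_of_ne_finset_zero (L := SummationFilter.unconditional _) (s := d.support) h0
    have e : ∑ k ∈ d.support, MvPowerSeries.coeff d (MvPowerSeries.X k * g k)
        = MvPowerSeries.coeff d (SX g) := by
      rw [coeff_SX]
      refine Finset.sum_congr rfl fun k hk => ?_
      rw [coeff_X_mul', if_pos hk]
    exact e ▸ h
  exact Pi.hasSum.mpr key

lemma hasSum_aU (w : ℕ → PS) (m : ℤ) :
    HasSum (fun k : ℕ => aC k * uCoeff w (m - k))
      (SX (fun k => uCoeff w (m - k)) - uCoeff w (m - 1)) := by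
  have h1 := hasSum_SX (fun k => uCoeff w (m - k))
  have h2 : HasSum (fun k : ℕ => if k = 1 then uCoeff w (m - 1) else 0) (uCoeff w (m - 1)) :=
    hasSum_ite_eq 1 _
  have e : (fun k : ℕ => aC k * uCoeff w (m - k))
      = fun k : ℕ => MvPowerSeries.X k * uCoeff w (m - k)
        - (if k = 1 then uCoeff w (m - 1) else 0) := by
    funext k
    rw [aC, sub_mul]
    congr 1
    by_cases h : k = 1
    · rw [if_pos h, if_pos h, one_mul, h]
      norm_num
    · rw [if_neg h, if_neg h, zero_mul]
  rw [e]
  exact h1.sub h2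

/-- The (finite) principal-part square coefficient. -/
noncomputable def Tm (w : ℕ → PS) (m : ℤ) : PS :=
  ∑ p ∈ Finset.Ioo m 0, uCoeff w p * uCoeff w (m - p)

lemma tsum_u (w : ℕ → PS) {m : ℤ} (hm : m < 0) :
    (∑' p : ℤ, uCoeff w p * uCoeff w (m - p)) = Tm w m := by
  apply tsum_eq_sum
  intro p hp
  rw [Finset.mem_Ioo] at hp
  by_cases h : 0 ≤ p
  · rw [uCoeff_nonneg w h, zero_mul]
  · rw [uCoeff_nonneg w (show (0:ℤ) ≤ m - p by omega), mul_zero]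

lemma tsum_y (w : ℕ → PS) {m : ℤ} (hm : m < 0) :
    (∑' p : ℤ, yCoeff w p * yCoeff w (m - p))
      = (SX (fun k => uCoeff w (m - k)) - uCoeff w (m - 1))
        + (SX (fun k => uCoeff w (m - k)) - uCoeff w (m - 1)) + (2:ℂ) • Tm w m := by
  set B := SX (fun k => uCoeff w (m - k)) - uCoeff w (m - 1) with hB
  have hG : HasSum (fun p : ℤ => if 0 ≤ p then aC p.toNat * uCoeff w (m - p) else 0) B := by
    have hinj : Function.Injective (fun k : ℕ => (k : ℤ)) := by
      intro a b h
      simp only at h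
      omega
    have h0 : ∀ p ∉ Set.range (fun k : ℕ => (k : ℤ)),
        (if 0 ≤ p then aC p.toNat * uCoeff w (m - p) else 0) = 0 := by
      intro p hp
      rw [if_neg]
      intro h
      exact hp ⟨p.toNat, show ((p.toNat : ℕ) : ℤ) = p by omega⟩
    apply (Function.Injective.hasSum_iff hinj h0).mp
    have e : ((fun p : ℤ => if 0 ≤ p then aC p.toNat * uCoeff w (m - p) else 0)
        ∘ fun k : ℕ => (k : ℤ)) = fun k : ℕ => aC k * uCoeff w (m - k) := by
      funext k
      simp only [Function.comp_apply, if_pos (Int.natCast_nonneg k), Int.toNat_natCast]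
    rw [e]
    exact hasSum_aU w m
  have hH : HasSum (fun p : ℤ => if p ≤ m then uCoeff w p * aC (m - p).toNat else 0) B := by
    have hinj : Function.Injective (fun k : ℕ => m - (k : ℤ)) := by
      intro a b h
      simp only at h
      omega
    have h0 : ∀ p ∉ Set.range (fun k : ℕ => m - (k : ℤ)),
        (if p ≤ m then uCoeff w p * aC (m - p).toNat else 0) = 0 := by
      intro p hp
      rw [if_neg]
      intro h
      exact hp ⟨(m - p).toNat, show m - (((m - p).toNat : ℕ) : ℤ) = p by omega⟩
    apply (Function.Injective.hasSum_iff hinj h0).mp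
    have e : ((fun p : ℤ => if p ≤ m then uCoeff w p * aC (m - p).toNat else 0)
        ∘ fun k : ℕ => m - (k : ℤ)) = fun k : ℕ => aC k * uCoeff w (m - k) := by
      funext k
      simp only [Function.comp_apply]
      rw [if_pos (show m - (k:ℤ) ≤ m by omega)]
      rw [show (m - (m - (k:ℤ))).toNat = k by omega]
      exact mul_comm _ _
    rw [e]
    exact hasSum_aU w m
  have hK : HasSum (fun p : ℤ => if m < p ∧ p < 0 then
      (2:ℂ) • (uCoeff w p * uCoeff w (m - p)) else 0) ((2:ℂ) • Tm w m) := by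
    have h0 : ∀ p ∉ Finset.Ioo m 0, (if m < p ∧ p < 0 then
        (2:ℂ) • (uCoeff w p * uCoeff w (m - p)) else 0) = 0 := by
      intro p hp
      rw [if_neg]
      simpa [Finset.mem_Ioo] using hp
    have h := hasSum_sum_of_ne_finset_zero (L := SummationFilter.unconditional _) h0
    have e : ∑ p ∈ Finset.Ioo m 0, (if m < p ∧ p < 0 then
        (2:ℂ) • (uCoeff w p * uCoeff w (m - p)) else 0) = (2:ℂ) • Tm w m := by
      rw [Tm, Finset.smul_sum]
      refine Finset.sum_congr rfl fun p hp => ?_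
      rw [if_pos (Finset.mem_Ioo.mp hp)]
    exact e ▸ h
  have hsum := (hG.add hH).add hK
  have e : (fun p : ℤ => yCoeff w p * yCoeff w (m - p))
      = fun p : ℤ => ((if 0 ≤ p then aC p.toNat * uCoeff w (m - p) else 0)
          + (if p ≤ m then uCoeff w p * aC (m - p).toNat else 0))
          + (if m < p ∧ p < 0 then (2:ℂ) • (uCoeff w p * uCoeff w (m - p)) else 0) := by
    funext p
    rcases le_or_gt 0 p with h | h
    · rw [if_pos h, if_neg (by omega), if_neg (by omega), add_zero, add_zero,
        yCoeff_nonneg w h, yCoeff_neg w (show m - p < 0 by omega), smul_mul_smul_comm,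
        inv_mul_cancel₀ sq2_ne, one_smul]
    · rcases le_or_gt p m with h2 | h2
      · rw [if_neg (by omega), if_pos h2, if_neg (by omega), zero_add, add_zero,
          yCoeff_neg w h, yCoeff_nonneg w (show (0:ℤ) ≤ m - p by omega), smul_mul_smul_comm,
          mul_inv_cancel₀ sq2_ne, one_smul]
      · rw [if_neg (by omega), if_neg (by omega), if_pos ⟨h2, h⟩, zero_add, zero_add,
          yCoeff_neg w h, yCoeff_neg w (show m - p < 0 by omega), smul_mul_smul_comm,
          sq2_mul_sq2]
  rw [e]
  exact hsum.tsum_eq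

/-- The fixed-point map. -/
noncomputable def Phi (w : ℕ → PS) (j : ℕ) : PS :=
  SX (fun k => uCoeff w (-(j+1:ℤ) - k)) + (2⁻¹:ℂ) • Tm w (-(j+1:ℤ))

lemma uCoeff_eq_w (w : ℕ → PS) (j : ℕ) : uCoeff w (-(j+1:ℤ) - 1) = w j := by
  rw [uCoeff, if_neg (by omega), if_pos (by omega)]
  congr 1

lemma cond_iff (w : ℕ → PS) :
    (∀ m : ℤ, m < 0 →
        (∑' p : ℤ, yCoeff w p * yCoeff w (m - p))
          = ∑' p : ℤ, uCoeff w p * uCoeff w (m - p))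
      ↔ ∀ j : ℕ, w j = Phi w j := by
  constructor
  · intro h j
    have hm : (-(j+1:ℤ)) < 0 := by omega
    have h2 := h _ hm
    rw [tsum_y w hm, tsum_u w hm, uCoeff_eq_w] at h2
    rw [Phi]
    linear_combination (norm := module) (-2⁻¹ : ℂ) • h2
  · intro h m hm
    obtain ⟨j, rfl⟩ : ∃ j : ℕ, m = -(j+1:ℤ) := ⟨(-m-1).toNat, by omega⟩
    rw [tsum_y w hm, tsum_u w hm, uCoeff_eq_w]
    have hj := h j
    rw [Phi] at hj
    linear_combination (norm := module) (-2 : ℂ) • hj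

/-! ### Degree lemmas -/

lemma degree_add' (a b : ℕ →₀ ℕ) :
    Finsupp.degree (a + b) = Finsupp.degree a + Finsupp.degree b := by
  simp [Finsupp.degree_eq_weight_one, map_add]

lemma degree_single' (k : ℕ) : Finsupp.degree (Finsupp.single k (1:ℕ)) = 1 := by
  simp [Finsupp.degree_eq_weight_one, Finsupp.weight_apply, Finsupp.sum_single_index]

lemma degree_sub_single_lt {d : ℕ →₀ ℕ} {k : ℕ} (hk : k ∈ d.support) :
    Finsupp.degree (d - Finsupp.single k 1) < Finsupp.degree d := by
  have hle : Finsupp.single k 1 ≤ d := by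
    rw [Finsupp.single_le_iff]
    rw [Finsupp.mem_support_iff] at hk
    omega
  have h1 : d - Finsupp.single k 1 + Finsupp.single k 1 = d := tsub_add_cancel_of_le hle
  have h2 := degree_add' (d - Finsupp.single k 1) (Finsupp.single k 1)
  rw [h1, degree_single'] at h2
  omega

lemma degree_le_of_add {q1 q2 d : ℕ →₀ ℕ} (h : q1 + q2 = d) :
    Finsupp.degree q1 ≤ Finsupp.degree d := by
  have := degree_add' q1 q2
  rw [h] at this
  omega

/-! ### The solution coefficients, by well-founded recursion -/

lemma lex_helper {a b c e : ℕ} (h1 : a ≤ c) (h2 : b < e) :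
    Prod.Lex (· < ·) (· < ·) (a, b) (c, e) := by
  rcases lt_or_eq_of_le h1 with h | h
  · exact Prod.Lex.left _ _ h
  · subst h
    exact Prod.Lex.right _ h2

lemma Ioo_mem_facts {j : ℕ} {p : ℤ} (hp : p ∈ Finset.Ioo (-(j+1:ℤ)) 0) :
    p.natAbs - 2 < j ∧ ((-(j+1:ℤ)) - p).natAbs - 2 < j := by
  rw [Finset.mem_Ioo] at hp
  omega

noncomputable def cS : ℕ → (ℕ →₀ ℕ) → ℂ
  | j, d =>
    (∑ k ∈ d.support.attach,
        if j + k.1 = 0 then (if d - Finsupp.single k.1 1 = 0 then 1 else 0)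
        else cS (j + k.1 - 1) (d - Finsupp.single k.1 1))
    + 2⁻¹ *
      ∑ p ∈ (Finset.Ioo (-(j+1:ℤ)) 0).attach,
        ∑ q ∈ (Finset.HasAntidiagonal.antidiagonal d).attach,
          (if p.1 = -1 then (if q.1.1 = 0 then 1 else 0) else cS (p.1.natAbs - 2) q.1.1) *
          (if (-(j+1:ℤ)) - p.1 = -1 then (if q.1.2 = 0 then 1 else 0)
           else cS (((-(j+1:ℤ)) - p.1).natAbs - 2) q.1.2)
  termination_by j d => (Finsupp.degree d, j)
  decreasing_by
  · exact Prod.Lex.left _ _ (degree_sub_single_lt k.2)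
  · exact lex_helper (degree_le_of_add (Finset.HasAntidiagonal.mem_antidiagonal.mp q.2))
      (Ioo_mem_facts p.2).1
  · exact lex_helper (degree_le_of_add (by rw [add_comm]; exact Finset.HasAntidiagonal.mem_antidiagonal.mp q.2))
      (Ioo_mem_facts p.2).2

/-- The linear part of the coefficient recursion. -/
noncomputable def lin (f : ℕ → (ℕ →₀ ℕ) → ℂ) (j : ℕ) (d : ℕ →₀ ℕ) : ℂ :=
  ∑ k ∈ d.support,
    if j + k = 0 then (if d - Finsupp.single k 1 = 0 then 1 else 0)
    else f (j + k - 1) (d - Finsupp.single k 1)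

/-- The quadratic part of the coefficient recursion. -/
noncomputable def quad (f : ℕ → (ℕ →₀ ℕ) → ℂ) (j : ℕ) (d : ℕ →₀ ℕ) : ℂ :=
  ∑ p ∈ Finset.Ioo (-(j+1:ℤ)) 0,
    ∑ q ∈ Finset.HasAntidiagonal.antidiagonal d,
      (if p = -1 then (if q.1 = 0 then 1 else 0) else f (p.natAbs - 2) q.1) *
      (if (-(j+1:ℤ)) - p = -1 then (if q.2 = 0 then 1 else 0)
       else f (((-(j+1:ℤ)) - p).natAbs - 2) q.2)

lemma cS_eq (j : ℕ) (d : ℕ →₀ ℕ) : cS j d = lin cS j d + 2⁻¹ * quad cS j d := by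
  rw [cS]
  unfold lin quad
  refine congrArg₂ (fun a b : ℂ => a + b) ?_ (congrArg (fun z : ℂ => 2⁻¹ * z) ?_)
  · exact Finset.sum_attach d.support (fun k => if j + k = 0 then
      (if d - Finsupp.single k 1 = 0 then (1:ℂ) else 0) else cS (j + k - 1) (d - Finsupp.single k 1))
  · refine (Finset.sum_attach (Finset.Ioo (-(j+1:ℤ)) 0) fun p => ∑ q ∈ (Finset.HasAntidiagonal.antidiagonal d).attach,
      (if p = -1 then (if q.1.1 = 0 then (1:ℂ) else 0) else cS (p.natAbs - 2) q.1.1) *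
      (if (-(j+1:ℤ)) - p = -1 then (if q.1.2 = 0 then 1 else 0)
       else cS (((-(j+1:ℤ)) - p).natAbs - 2) q.1.2)).trans ?_
    refine Finset.sum_congr rfl fun p _ => ?_
    exact Finset.sum_attach (Finset.HasAntidiagonal.antidiagonal d) (fun q =>
      (if p = -1 then (if q.1 = 0 then (1:ℂ) else 0) else cS (p.natAbs - 2) q.1) *
      (if (-(j+1:ℤ)) - p = -1 then (if q.2 = 0 then 1 else 0)
       else cS (((-(j+1:ℤ)) - p).natAbs - 2) q.2))

lemma coeff_uCoeff (w : ℕ → PS) {p : ℤ} (hp : p < 0) (d : ℕ →₀ ℕ) :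
    MvPowerSeries.coeff d (uCoeff w p)
      = if p = -1 then (if d = 0 then 1 else 0)
        else MvPowerSeries.coeff d (w (p.natAbs - 2)) := by
  rw [uCoeff]
  by_cases h : p = -1
  · rw [if_pos h, if_pos h]
    simp [MvPowerSeries.coeff_one]
  · rw [if_neg h, if_neg h, if_pos (by omega)]

lemma coeff_Phi (w : ℕ → PS) (j : ℕ) (d : ℕ →₀ ℕ) :
    MvPowerSeries.coeff d (Phi w j)
      = lin (fun i d' => MvPowerSeries.coeff d' (w i)) j d
        + 2⁻¹ * quad (fun i d' => MvPowerSeries.coeff d' (w i)) j d := by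
  rw [Phi, map_add, map_smul, smul_eq_mul]
  congr 1
  · rw [coeff_SX, lin]
    refine Finset.sum_congr rfl fun k hk => ?_
    rw [coeff_uCoeff w (show -(j+1:ℤ) - k < 0 by omega)]
    by_cases h : j + k = 0
    · rw [if_pos (show -(j+1:ℤ) - k = -1 by omega), if_pos h]
    · rw [if_neg (show ¬(-(j+1:ℤ) - k = -1) by omega), if_neg h,
        show ((-(j+1:ℤ) - k).natAbs - 2) = j + k - 1 by omega]
  · congr 1
    rw [Tm, map_sum, quad]
    refine Finset.sum_congr rfl fun p hp => ?_
    rw [Finset.mem_Ioo] at hp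
    rw [MvPowerSeries.coeff_mul]
    refine Finset.sum_congr rfl fun q hq => ?_
    rw [coeff_uCoeff w (show p < 0 by omega), coeff_uCoeff w (show -(j+1:ℤ) - p < 0 by omega)]

/-- The solution. -/
noncomputable def wS (j : ℕ) : PS := cS j

lemma coeff_wS (j : ℕ) (d : ℕ →₀ ℕ) : MvPowerSeries.coeff d (wS j) = cS j d := rfl

lemma wS_fix (j : ℕ) : wS j = Phi wS j := by
  ext d
  rw [coeff_Phi, coeff_wS, cS_eq]
  rfl

lemma fix_coeff (w' : ℕ → PS) (h : ∀ j, w' j = Phi w' j) :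
    ∀ (D : ℕ) (j : ℕ) (d : ℕ →₀ ℕ), Finsupp.degree d = D →
      MvPowerSeries.coeff d (w' j) = cS j d := by
  intro D
  induction D using Nat.strong_induction_on with
  | _ D ihD =>
    intro j
    induction j using Nat.strong_induction_on with
    | _ j ihj =>
      intro d hd
      rw [h j, coeff_Phi, cS_eq]
      congr 1
      · rw [lin, lin]
        refine Finset.sum_congr rfl fun k hk => ?_
        by_cases hjk : j + k = 0
        · rw [if_pos hjk, if_pos hjk]
        · rw [if_neg hjk, if_neg hjk]
          exact ihD _ (hd ▸ degree_sub_single_lt hk) _ _ rfl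
      · congr 1
        rw [quad, quad]
        refine Finset.sum_congr rfl fun p hp => ?_
        refine Finset.sum_congr rfl fun q hq => ?_
        have hq' := Finset.HasAntidiagonal.mem_antidiagonal.mp hq
        have hfacts := Ioo_mem_facts hp
        congr 1
        · by_cases h1 : p = -1
          · rw [if_pos h1, if_pos h1]
          · rw [if_neg h1, if_neg h1]
            have hdeg : Finsupp.degree q.1 ≤ D := hd ▸ degree_le_of_add hq'
            rcases lt_or_eq_of_le hdeg with hlt | heq
            · exact ihD _ hlt _ _ rfl
            · exact ihj _ hfacts.1 _ heq
        · by_cases h1 : (-(j+1:ℤ)) - p = -1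
          · rw [if_pos h1, if_pos h1]
          · rw [if_neg h1, if_neg h1]
            have hdeg : Finsupp.degree q.2 ≤ D :=
              hd ▸ degree_le_of_add (by rw [add_comm]; exact hq')
            rcases lt_or_eq_of_le hdeg with hlt | heq
            · exact ihD _ hlt _ _ rfl
            · exact ihj _ hfacts.2 _ heq

end SpecialDeformationAux

/-- There is a unique sequence `w₀, w₁, … ∈ ℂ[[v₀,v₁,…]]` such that the Laurent
series `y = (1/√2)∑_{n≥0}(v_n − δ_{n,1})z^n + √2/z + √2∑_{n≥0} w_n z^{−n−2}`
satisfies `(y²)_− = (1/z + ∑_{n≥0} w_n z^{−n−2})²`, i.e. such that for every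
negative exponent `m` the `z^m`-coefficient of `y²` equals that of the square of
the principal part. -/
theorem special_deformation_unique :
    ∃! w : ℕ → MvPowerSeries ℕ ℂ,
      ∀ m : ℤ, m < 0 →
        (∑' p : ℤ, yCoeff w p * yCoeff w (m - p))
          = ∑' p : ℤ, uCoeff w p * uCoeff w (m - p) := by
  refine ⟨SpecialDeformationAux.wS, (SpecialDeformationAux.cond_iff _).mpr SpecialDeformationAux.wS_fix, ?_⟩
  intro w' hw'
  funext j
  ext d
  rw [SpecialDeformationAux.fix_coeff w' ((SpecialDeformationAux.cond_iff w').mp hw')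
    (Finsupp.degree d) j d rfl]
  rfl
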